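/- Let B be a finite set of points in the Euclidean plane ℝ² and let q₀ ∈ B. If ‖∑_{q ∈ B, q ≠ q₀} vers(q₀ − q)‖ ≤ 1, then q₀ is a global minimizer over ℝ² of the Weber function W_B(p) = ∑_{q ∈ B} ‖p − q‖. -/

import Mathlib

open scoped Classical

/-- `vers v = v / ‖v‖` for `v ≠ 0`, and `vers 0 = 0`
(note `‖(0 : _)‖⁻¹ = 0` in `ℝ`, so the single formula covers both cases). -/
noncomputable def vers (v : EuclideanSpace ℝ (Fin 2)) : EuclideanSpace ℝ (Fin 2) :=
  ‖v‖⁻¹ • v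

/-- Let `B` be a finite set of points in the plane and `q₀ ∈ B`.
If `‖∑_{q ∈ B, q ≠ q₀} vers (q₀ - q)‖ ≤ 1`, then `q₀` is a global minimizer of the
Weber function of `B`. -/
theorem weber_min_of_absorbing (B : Finset (EuclideanSpace ℝ (Fin 2)))
    (q₀ : EuclideanSpace ℝ (Fin 2)) (hq₀ : q₀ ∈ B)
    (h : ‖∑ q ∈ B.erase q₀, vers (q₀ - q)‖ ≤ 1) :
    ∀ p : EuclideanSpace ℝ (Fin 2), (∑ q ∈ B, ‖q₀ - q‖) ≤ ∑ q ∈ B, ‖p - q‖ := by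
  intro p
  have key : ∀ q ∈ B.erase q₀,
      ‖q₀ - q‖ + (inner ℝ (vers (q₀ - q)) (p - q₀) : ℝ) ≤ ‖p - q‖ := by
    intro q hq
    have hv : q₀ - q ≠ 0 := sub_ne_zero.2 (Finset.ne_of_mem_erase hq).symm
    have hv' : ‖q₀ - q‖ ≠ 0 := norm_ne_zero_iff.2 hv
    have hnorm : ‖vers (q₀ - q)‖ = 1 := by
      simp [vers, norm_smul, abs_of_nonneg (inv_nonneg.2 (norm_nonneg _)),
        inv_mul_cancel₀ hv']
    have h1 : (inner ℝ (vers (q₀ - q)) (p - q) : ℝ) ≤ ‖p - q‖ := by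
      calc (inner ℝ (vers (q₀ - q)) (p - q) : ℝ) ≤ ‖vers (q₀ - q)‖ * ‖p - q‖ :=
            real_inner_le_norm _ _
        _ = ‖p - q‖ := by rw [hnorm, one_mul]
    have h2 : (inner ℝ (vers (q₀ - q)) (p - q) : ℝ)
        = ‖q₀ - q‖ + (inner ℝ (vers (q₀ - q)) (p - q₀) : ℝ) := by
      have hd : p - q = (q₀ - q) + (p - q₀) := by abel
      rw [hd, inner_add_right]
      congr 1
      rw [vers, real_inner_smul_left, real_inner_self_eq_norm_sq, sq,
        inv_mul_cancel_left₀ hv']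
    linarith
  have hsum : ∑ q ∈ B.erase q₀, ‖q₀ - q‖
      + (inner ℝ (∑ q ∈ B.erase q₀, vers (q₀ - q)) (p - q₀) : ℝ)
      ≤ ∑ q ∈ B.erase q₀, ‖p - q‖ := by
    rw [sum_inner, ← Finset.sum_add_distrib]
    exact Finset.sum_le_sum key
  set S := ∑ q ∈ B.erase q₀, vers (q₀ - q) with hS
  have hcs : -(‖p - q₀‖) ≤ (inner ℝ S (p - q₀) : ℝ) := by
    have h1 : |(inner ℝ S (p - q₀) : ℝ)| ≤ ‖S‖ * ‖p - q₀‖ := abs_real_inner_le_norm _ _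
    have h2 : ‖S‖ * ‖p - q₀‖ ≤ 1 * ‖p - q₀‖ :=
      mul_le_mul_of_nonneg_right h (norm_nonneg _)
    have := abs_le.1 h1
    nlinarith [norm_nonneg (p - q₀)]
  have e1 : ∑ q ∈ B, ‖q₀ - q‖ = ∑ q ∈ B.erase q₀, ‖q₀ - q‖ := by
    rw [← Finset.add_sum_erase _ _ hq₀, sub_self, norm_zero, zero_add]
  have e2 : ∑ q ∈ B, ‖p - q‖ = ‖p - q₀‖ + ∑ q ∈ B.erase q₀, ‖p - q‖ :=
    (Finset.add_sum_erase _ _ hq₀).symm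
  rw [e1, e2]
  linarith
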